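/- For a ring R with endomorphism σ extended coefficientwise to the Laurent polynomial ring, R[x] is strongly σ̄-symmetric if and only if R[x,x⁻¹] is strongly σ̄-symmetric. -/

import Mathlib

/-- The coefficient of `x^n` in the product of two skew polynomials in `R[x;σ]`
(where `x·r = σ(r)·x`), given their coefficient functions. -/
def skewMul {R : Type*} [Ring R] (σ : R →+* R) (p q : ℕ → R) : ℕ → R :=
  fun n => ∑ i ∈ Finset.range (n + 1), p i * (⇑σ)^[i] (q (n - i))

/-- A ring is symmetric if `abc = 0` implies `acb = 0`. -/
def SymmetricRing (R : Type*) [Ring R] : Prop :=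
  ∀ a b c : R, a * b * c = 0 → a * c * b = 0

/-- `R` is strongly `σ`-symmetric if the skew polynomial ring `R[x;σ]` is symmetric,
expressed via the coefficientwise skew convolution. -/
def StronglySkewSymmetric (R : Type*) [Ring R] (σ : R →+* R) : Prop :=
  ∀ p q r : Polynomial R,
    skewMul σ (skewMul σ p.coeff q.coeff) r.coeff = 0 →
    skewMul σ (skewMul σ p.coeff r.coeff) q.coeff = 0

open LaurentPolynomial in
/-- The coefficientwise extension of `σ` to the Laurent polynomial ring `R[T;T⁻¹]`. -/
noncomputable def laurentMap {R : Type*} [Ring R] (σ : R →+* R) :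
    LaurentPolynomial R →+* LaurentPolynomial R :=
  AddMonoidAlgebra.liftNCRingHom ((LaurentPolynomial.C (R := R)).comp σ)
    { toFun := fun n => LaurentPolynomial.T (Multiplicative.toAdd n)
      map_one' := LaurentPolynomial.T_zero (R := R)
      map_mul' := fun x y => LaurentPolynomial.T_add (R := R)
          (Multiplicative.toAdd x) (Multiplicative.toAdd y) }
    (fun x y => (LaurentPolynomial.commute_T _ _).symm)

open LaurentPolynomial Polynomial

section Aux

variable {R : Type*} [Ring R] (σ : R →+* R)

lemma laurentMap_single (n : ℤ) (r : R) :
    laurentMap σ (AddMonoidAlgebra.single n r) = LaurentPolynomial.C (σ r) * T n := by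
  unfold laurentMap
  rw [AddMonoidAlgebra.liftNCRingHom_single]
  rfl

lemma laurentMap_C (r : R) :
    laurentMap σ (LaurentPolynomial.C r) = LaurentPolynomial.C (σ r) := by
  rw [← single_eq_C, laurentMap_single, T_zero, mul_one]

lemma laurentMap_T (n : ℤ) : laurentMap σ (T n) = T n := by
  rw [T, laurentMap_single, map_one, map_one, one_mul]
  rfl

lemma laurentMap_toLaurent (f : R[X]) :
    laurentMap σ (toLaurent f) = toLaurent (f.map σ) := by
  have : (laurentMap σ).comp Polynomial.toLaurent
      = (Polynomial.toLaurent (R := R)).comp (mapRingHom σ) := by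
    apply Polynomial.ringHom_ext
    · intro a
      simp [laurentMap_C, Polynomial.toLaurent_C]
    · simp [Polynomial.toLaurent_X, laurentMap_T]
  exact DFunLike.congr_fun this f

lemma iterate_comm' {S S' : Type*} (φ : S → S') (τ : S → S) (τ' : S' → S')
    (h : ∀ a, φ (τ a) = τ' (φ a)) (i : ℕ) (a : S) : φ (τ^[i] a) = τ'^[i] (φ a) := by
  induction i generalizing a with
  | zero => simp
  | succ k ih =>
      rw [Function.iterate_succ_apply, Function.iterate_succ_apply, ih, h]

lemma skewMul_map {S S' : Type*} [Ring S] [Ring S'] (φ : S →+* S') (τ : S →+* S)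
    (τ' : S' →+* S') (h : ∀ a, φ (τ a) = τ' (φ a)) (p q : ℕ → S) (n : ℕ) :
    φ (skewMul τ p q n) = skewMul τ' (fun i => φ (p i)) (fun i => φ (q i)) n := by
  unfold skewMul
  rw [map_sum]
  exact Finset.sum_congr rfl fun i _ => by rw [map_mul, iterate_comm' φ τ τ' h]

lemma iter_laurentMap_T_mul (i : ℕ) (N : ℤ) (a : LaurentPolynomial R) :
    (⇑(laurentMap σ))^[i] (T N * a) = T N * (⇑(laurentMap σ))^[i] a := by
  induction i generalizing a with
  | zero => simp
  | succ k ih =>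
      rw [Function.iterate_succ_apply, Function.iterate_succ_apply, map_mul,
        laurentMap_T, ih]

lemma T_shuffle (N M : ℤ) (a c : LaurentPolynomial R) :
    (T N * a) * (T M * c) = T (N + M) * (a * c) := by
  rw [T_add, mul_assoc (T N) a, ← mul_assoc a (T M) c, ← (commute_T M a).eq]
  simp only [mul_assoc]

lemma T_mul_eq_zero {m : ℤ} {a : LaurentPolynomial R} (h : T m * a = 0) : a = 0 := by
  have := congrArg (fun x => T (-m) * x) h
  simpa only [← mul_assoc, ← T_add, neg_add_cancel, T_zero, one_mul, mul_zero] using this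

lemma skewMul_T (N M : ℤ) (p q : ℕ → LaurentPolynomial R) (n : ℕ) :
    skewMul (laurentMap σ) (fun i => T N * p i) (fun i => T M * q i) n
      = T (N + M) * skewMul (laurentMap σ) p q n := by
  unfold skewMul
  rw [Finset.mul_sum]
  exact Finset.sum_congr rfl fun i _ => by
    rw [iter_laurentMap_T_mul, T_shuffle]

lemma exists_common_den (P : Polynomial (LaurentPolynomial R)) :
    ∃ (N : ℕ) (p : Polynomial (R[X])),
      ∀ i, toLaurent (p.coeff i) = T (N : ℤ) * P.coeff i := by
  classical
  have spec : ∀ i, ∃ (n : ℕ) (f : R[X]), toLaurent f = P.coeff i * T n := fun i =>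
    (P.coeff i).exists_T_pow
  choose nn ff hff using spec
  set N : ℕ := P.support.sup nn with hN
  have key : ∀ i, toLaurent (ff i * X ^ (N - nn i)) = T (N : ℤ) * P.coeff i := by
    intro i
    by_cases hi : i ∈ P.support
    · have hle : nn i ≤ N := Finset.le_sup hi
      have hcast : ((nn i : ℤ) + ((N - nn i : ℕ) : ℤ)) = (N : ℤ) := by omega
      rw [map_mul, Polynomial.toLaurent_X_pow, hff, mul_assoc, ← T_add, hcast,
        (commute_T (N : ℤ) (P.coeff i)).eq]
    · have h0 : P.coeff i = 0 := Polynomial.notMem_support_iff.mp hi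
      have hf0 : ff i = 0 := by
        have := hff i
        rw [h0, zero_mul] at this
        exact Polynomial.toLaurent_eq_zero.mp this
      rw [hf0, zero_mul, map_zero, h0, mul_zero]
  refine ⟨N, ⟨AddMonoidAlgebra.ofCoeff (Finsupp.onFinset P.support (fun i => ff i * X ^ (N - nn i))
      fun i hgi => ?_)⟩, fun i => ?_⟩
  · by_contra hi
    apply hgi
    have h0 : P.coeff i = 0 := Polynomial.notMem_support_iff.mp hi
    have := key i
    rw [h0, mul_zero] at this
    exact Polynomial.toLaurent_eq_zero.mp this
  · rw [Polynomial.coeff]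
    simpa using key i

end Aux

theorem polynomial_iff_laurent_stronglySkewSymmetric
    {R : Type*} [Ring R] (σ : R →+* R) :
    StronglySkewSymmetric (Polynomial R) (Polynomial.mapRingHom σ) ↔
      StronglySkewSymmetric (LaurentPolynomial R) (laurentMap σ) := by
  have hcomm : ∀ f : R[X], toLaurent ((mapRingHom σ) f) = laurentMap σ (toLaurent f) := by
    intro f
    rw [coe_mapRingHom, laurentMap_toLaurent]
  have hmap : ∀ (p q : ℕ → R[X]) (n : ℕ),
      toLaurent (skewMul (mapRingHom σ) p q n)
        = skewMul (laurentMap σ) (fun i => toLaurent (p i)) (fun i => toLaurent (q i)) n :=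
    fun p q n => skewMul_map _ _ _ hcomm p q n
  have hmapf : ∀ p q : ℕ → R[X],
      (fun i => toLaurent (skewMul (mapRingHom σ) p q i))
        = skewMul (laurentMap σ) (fun i => toLaurent (p i)) (fun i => toLaurent (q i)) :=
    fun p q => funext (hmap p q)
  constructor
  · intro hpoly P Q Rr H
    obtain ⟨N, p, hp⟩ := exists_common_den P
    obtain ⟨M, q, hq⟩ := exists_common_den Q
    obtain ⟨K, r, hr⟩ := exists_common_den Rr
    have outer : ∀ (A B C : Polynomial (LaurentPolynomial R)) (a b c : Polynomial (R[X]))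
        (Na Nb Nc : ℕ), (∀ i, toLaurent (a.coeff i) = T (Na : ℤ) * A.coeff i) →
        (∀ i, toLaurent (b.coeff i) = T (Nb : ℤ) * B.coeff i) →
        (∀ i, toLaurent (c.coeff i) = T (Nc : ℤ) * C.coeff i) →
        ∀ n, toLaurent (skewMul (mapRingHom σ)
              (skewMul (mapRingHom σ) a.coeff b.coeff) c.coeff n)
          = T (((Na : ℤ) + Nb) + Nc)
              * skewMul (laurentMap σ) (skewMul (laurentMap σ) A.coeff B.coeff) C.coeff n := by
      intro A B C a b c Na Nb Nc ha hb hc n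
      rw [hmap, hmapf a.coeff b.coeff, funext ha, funext hb, funext hc]
      have einner : skewMul (laurentMap σ) (fun i => T (Na : ℤ) * A.coeff i)
          (fun i => T (Nb : ℤ) * B.coeff i)
          = fun i => T ((Na : ℤ) + Nb) * skewMul (laurentMap σ) A.coeff B.coeff i :=
        funext fun i => skewMul_T σ _ _ _ _ i
      rw [einner, skewMul_T]
    have hzero : skewMul (mapRingHom σ)
        (skewMul (mapRingHom σ) p.coeff q.coeff) r.coeff = 0 := by
      funext n
      have h1 := outer P Q Rr p q r N M K hp hq hr n
      rw [H] at h1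
      simp only [Pi.zero_apply, mul_zero] at h1
      exact Polynomial.toLaurent_eq_zero.mp h1
    have hsym := hpoly p q r hzero
    funext n
    have h2 := outer P Rr Q p r q N K M hp hr hq n
    rw [hsym] at h2
    simp only [Pi.zero_apply, map_zero] at h2
    simpa using T_mul_eq_zero h2.symm
  · intro hlau p q r H
    have e : ∀ s : Polynomial (R[X]), (s.map (toLaurent : R[X] →+* _)).coeff
        = fun i => toLaurent (s.coeff i) :=
      fun s => funext fun i => Polynomial.coeff_map _ _
    have H' : skewMul (laurentMap σ) (skewMul (laurentMap σ)
        (p.map toLaurent).coeff (q.map toLaurent).coeff) (r.map toLaurent).coeff = 0 := by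
      funext n
      rw [e p, e q, e r, ← hmapf p.coeff q.coeff,
        ← hmap (skewMul (mapRingHom σ) p.coeff q.coeff) r.coeff n, H]
      simp
    have hsym := hlau _ _ _ H'
    funext n
    have h2 := congrFun hsym n
    rw [e p, e r, e q, ← hmapf p.coeff r.coeff,
      ← hmap (skewMul (mapRingHom σ) p.coeff r.coeff) q.coeff n] at h2
    simp only [Pi.zero_apply] at h2
    simpa using Polynomial.toLaurent_eq_zero.mp h2
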